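/- (Lemma 1, second identity.) Assume η = r'/(2lr) with r, r' ∈ ℤ, r > 0 (so 2rlη = r' ∈ ℤ). Then for all integers i'', j'' and every w ∈ ℂ: ∏_{k=0}^{r−1} θ^{(2l)}_{00}(2(i''−j''+2k+1)lη + w) = ∏_{k=0}^{r−1} θ^{(2l)}_{00}(2(i''−j''+2k+1)lη − w). With w = (u'−u)/2 this says that, under the assumption λ₀ − v = 2r''lη (r'' ∈ ℤ, so Im(λ₀−v) = 0), the quantities B_{ij} := θ^{(2l)}_{00}(2(i−j)lη + (u'−u)/2 + 2lη)/θ^{(2l)}_{00}(2(i−j)lη + (u−u')/2 + 2lη) satisfy ∏_{k=0}^{r−1} B_{i''+k, j''−k} = 1 whenever the denominators are nonzero. -/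

import Mathlib

noncomputable section

open Complex

/-- Theta function with characteristics `θ_{ab}(z,τ)`. -/
def theta (a b : ℝ) (z τ : ℂ) : ℂ :=
  ∑' n : ℤ, Complex.exp ((Real.pi : ℂ) * Complex.I * ((a : ℂ)/2 + (n : ℂ))^2 * τ +
    2 * (Real.pi : ℂ) * Complex.I * ((a : ℂ)/2 + (n : ℂ)) * ((b : ℂ)/2 + z))

/-- `[z;a]_k := ∏_{j=0}^{k-1} θ₁₁(z+a+2jη,τ) θ₁₁(-z+a+2jη,τ)`. -/
def brK (η τ z a : ℂ) (k : ℕ) : ℂ :=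
  ∏ j ∈ Finset.range k,
    theta 1 1 (z + a + 2*(j:ℂ)*η) τ * theta 1 1 (-z + a + 2*(j:ℂ)*η) τ

/-- `f_ε(λ,u,z) := [z;(ελ+u)/2+(-l+1)η]_{2l}`, with `tl = 2l`. -/
def fEps (η τ l : ℂ) (tl : ℕ) (ε lam u z : ℂ) : ℂ :=
  brK η τ z ((ε*lam + u)/2 + (-l+1)*η) tl

/-- `ω_λ(u;v)(z) := [z;(λ+u-v)/2+(-l+1)η]_{2l}`. -/
def omegaFn (η τ l : ℂ) (tl : ℕ) (lam u v z : ℂ) : ℂ :=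
  brK η τ z ((lam + u - v)/2 + (-l+1)*η) tl

def s0f (η τ z : ℂ) : ℂ := theta 1 1 η τ * theta 1 1 (2*z) τ
def s1f (η τ z : ℂ) : ℂ := theta 1 0 η τ * theta 1 0 (2*z) τ
def s2f (η τ z : ℂ) : ℂ := Complex.I * theta 0 0 η τ * theta 0 0 (2*z) τ
def s3f (η τ z : ℂ) : ℂ := theta 0 1 η τ * theta 0 1 (2*z) τ

/-- The difference operator `ρ^l(S^a)` associated to the coefficient function `s`. -/
def rhoS (η τ l : ℂ) (s : ℂ → ℂ) : (ℂ → ℂ) →ₗ[ℂ] (ℂ → ℂ) where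
  toFun f := fun z =>
    (s (z - l*η) * f (z + η) - s (-z - l*η) * f (z - η)) / theta 1 1 (2*z) τ
  map_add' f g := by
    funext z
    simp only [Pi.add_apply]
    ring
  map_smul' c f := by
    funext z
    simp only [Pi.smul_apply, smul_eq_mul, RingHom.id_apply]
    ring

def W0 (η τ u : ℂ) : ℂ := theta 1 1 u τ / theta 1 1 η τ
def W1 (η τ u : ℂ) : ℂ := theta 1 0 u τ / theta 1 0 η τ
def W2 (η τ u : ℂ) : ℂ := theta 0 0 u τ / theta 0 0 η τ
def W3 (η τ u : ℂ) : ℂ := theta 0 1 u τ / theta 0 1 η τ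

/-- `θ^{(2l)}_{00}(u) := ∏_{j=0}^{2l-1} θ₀₀(u+(2j-2l+1)η,τ)`, with `tl = 2l`. -/
def theta2l (η τ : ℂ) (tl : ℕ) (u : ℂ) : ℂ :=
  ∏ j ∈ Finset.range tl, theta 0 0 (u + (2*(j:ℂ) - (tl:ℂ) + 1)*η) τ

/-- The gauge transformation matrix `M_λ(v)`. -/
def Mlam (τ lam v : ℂ) : Matrix (Fin 2) (Fin 2) ℂ :=
  !![-theta 0 0 ((lam - v)/2) (τ/2), -theta 0 0 ((lam + v)/2) (τ/2);
     theta 0 1 ((lam - v)/2) (τ/2), theta 0 1 ((lam + v)/2) (τ/2)]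

/-- The `L`-operator as a 2×2 matrix of difference operators. -/
def LopM (η τ l u : ℂ) : Matrix (Fin 2) (Fin 2) (Module.End ℂ (ℂ → ℂ)) :=
  !![W0 η τ u • rhoS η τ l (s0f η τ) + W3 η τ u • rhoS η τ l (s3f η τ),
     W1 η τ u • rhoS η τ l (s1f η τ) - (Complex.I * W2 η τ u) • rhoS η τ l (s2f η τ);
     W1 η τ u • rhoS η τ l (s1f η τ) + (Complex.I * W2 η τ u) • rhoS η τ l (s2f η τ),
     W0 η τ u • rhoS η τ l (s0f η τ) - W3 η τ u • rhoS η τ l (s3f η τ)]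

/-- `N := adj(M_{λ₀+4(j+ε)lη}(v)) · L(u) · M_{λ₀+4jlη}(v)`. -/
def NMat (η τ l lam0 v u : ℂ) (j : ℤ) (ε : ℂ) :
    Matrix (Fin 2) (Fin 2) (Module.End ℂ (ℂ → ℂ)) :=
  ((Mlam τ (lam0 + 4*((j:ℂ)+ε)*l*η) v).adjugate).map
      (algebraMap ℂ (Module.End ℂ (ℂ → ℂ))) *
    LopM η τ l u *
    (Mlam τ (lam0 + 4*(j:ℂ)*l*η) v).map (algebraMap ℂ (Module.End ℂ (ℂ → ℂ)))

/-- The kernel `μ(z,w)` of the Sklyanin form. -/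
def muK (η τ : ℂ) (tl : ℕ) (z w : ℂ) : ℂ :=
  theta 1 1 (2*z) τ * theta 1 1 (2*w) τ /
    ∏ j ∈ Finset.range (tl + 2),
      (theta 0 0 (z + w + (2*(j:ℂ) - (tl:ℂ) - 1)*η) τ *
       theta 0 0 (z - w + (2*(j:ℂ) - (tl:ℂ) - 1)*η) τ)

/-- Integrand of the Sklyanin form. -/
def sklIntegrand (η τ : ℂ) (tl : ℕ) (f g : ℂ → ℂ) (x y : ℝ) : ℂ :=
  (starRingEnd ℂ) (f ((x:ℂ) + (y:ℂ)*Complex.I)) * g ((x:ℂ) + (y:ℂ)*Complex.I) *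
    muK η τ tl ((x:ℂ) + (y:ℂ)*Complex.I) ((x:ℂ) - (y:ℂ)*Complex.I)

/-- The Sklyanin form `⟨f,g⟩` (with `τ = i t₀`). -/
def sklForm (η τ : ℂ) (tl : ℕ) (t0 : ℝ) (f g : ℂ → ℂ) : ℂ :=
  ∫ x in (0:ℝ)..1, ∫ y in (0:ℝ)..t0, sklIntegrand η τ tl f g x y

/-- The constant `C_{2l}`. -/
def C2l (η τ : ℂ) (tl : ℕ) : ℂ :=
  (-2*η * Complex.exp (3*(Real.pi:ℂ)*Complex.I*τ/4)) /
    (theta 1 1 (2*((tl:ℂ)+1)*η) τ *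
      ∏' j : ℕ, (1 - Complex.exp (2*(Real.pi:ℂ)*Complex.I*((j:ℂ)+1)*τ))^3)

/-- Auxiliary lemmas for `stmt10`. -/
lemma theta00_even' (z τ : ℂ) : theta 0 0 (-z) τ = theta 0 0 z τ := by
  unfold theta
  rw [← (Equiv.neg ℤ).tsum_eq]
  apply tsum_congr; intro n
  simp only [Equiv.neg_apply]
  congr 1
  push_cast
  ring

lemma theta00_period' (z τ : ℂ) (m : ℤ) : theta 0 0 (z + (m:ℂ)) τ = theta 0 0 z τ := by
  unfold theta
  apply tsum_congr; intro n
  have h : (Real.pi : ℂ) * Complex.I * (((0:ℝ) : ℂ)/2 + (n : ℂ))^2 * τ +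
      2 * (Real.pi : ℂ) * Complex.I * (((0:ℝ) : ℂ)/2 + (n : ℂ)) * (((0:ℝ):ℂ)/2 + (z + m))
      = ((Real.pi : ℂ) * Complex.I * (((0:ℝ):ℂ)/2 + (n : ℂ))^2 * τ +
      2 * (Real.pi : ℂ) * Complex.I * (((0:ℝ):ℂ)/2 + (n : ℂ)) * (((0:ℝ):ℂ)/2 + z))
      + ((n*m : ℤ):ℂ) * (2 * (Real.pi:ℂ) * Complex.I) := by push_cast; ring
  rw [h, Complex.exp_add, Complex.exp_int_mul_two_pi_mul_I, mul_one]

lemma prod_nested' (f : ℕ → ℂ) (r t : ℕ) :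
    ∏ k ∈ Finset.range r, ∏ j ∈ Finset.range t, f (t*k + j)
      = ∏ m ∈ Finset.range (r*t), f m := by
  induction r with
  | zero => simp
  | succ n ih =>
    rw [Finset.prod_range_succ, ih, Nat.succ_mul, Finset.prod_range_add]
    congr 1
    exact Finset.prod_congr rfl (fun j _ => by rw [Nat.mul_comm])

lemma prod_shift_step' (g : ℤ → ℂ) (N : ℕ) (hg : ∀ m : ℤ, g (m + N) = g m) (b : ℤ) :
    ∏ k ∈ Finset.range N, g ((b+1) + k) = ∏ k ∈ Finset.range N, g (b + k) := by
  cases N with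
  | zero => simp
  | succ M =>
    rw [Finset.prod_range_succ, Finset.prod_range_succ']
    have h1 : g (b + 1 + (M:ℤ)) = g b := by
      have := hg b
      push_cast at this ⊢
      rw [show b + 1 + (M:ℤ) = b + ((M:ℤ)+1) by ring, this]
    rw [h1]
    congr 1
    · exact Finset.prod_congr rfl (fun k _ => congrArg g (by push_cast; ring))
    · exact congrArg g (by norm_num)

lemma prod_shift' (g : ℤ → ℂ) (N : ℕ) (hg : ∀ m : ℤ, g (m + N) = g m) (a : ℤ) :
    ∏ k ∈ Finset.range N, g (a + k) = ∏ k ∈ Finset.range N, g k := by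
  induction a using Int.induction_on with
  | zero => simp
  | succ a ih => rw [prod_shift_step' g N hg a, ih]
  | pred a ih =>
    have h := prod_shift_step' g N hg (-(a:ℤ)-1)
    rw [show (-(a:ℤ)-1+1) = -(a:ℤ) by ring] at h
    rw [show (-(a:ℤ)-(1:ℤ)) = -(a:ℤ)-1 from rfl, ← h, ih]

/-- The basic building block `θ₀₀(w + (A+2m)η)`. -/
def Gaux (η τ w : ℂ) (A : ℤ) (m : ℤ) : ℂ :=
  theta 0 0 (w + ((A:ℂ) + 2*(m:ℂ))*η) τ

/-- Lemma 1, second identity, and `∏ B_{i''+k,j''-k} = 1`. -/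
theorem stmt10 (τ : ℂ) (hτ : 0 < τ.im) (η l : ℂ) (tl : ℕ) (htl : 0 < tl)
    (hl : (tl:ℂ) = 2*l)
    (r : ℕ) (r' : ℤ) (hr : 0 < r) (hη : η = (r':ℂ) / (2*l*(r:ℂ))) :
    (∀ i'' j'' : ℤ, ∀ w : ℂ,
      ∏ k ∈ Finset.range r,
          theta2l η τ tl (2*((i'':ℂ)-(j'':ℂ)+2*(k:ℂ)+1)*l*η + w)
        = ∏ k ∈ Finset.range r,
          theta2l η τ tl (2*((i'':ℂ)-(j'':ℂ)+2*(k:ℂ)+1)*l*η - w)) ∧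
    (∀ i'' j'' : ℤ, ∀ u u' : ℂ,
      (∀ k ∈ Finset.range r,
        theta2l η τ tl (2*(((i'':ℂ)+(k:ℂ))-((j'':ℂ)-(k:ℂ)))*l*η
          + (u-u')/2 + 2*l*η) ≠ 0) →
      ∏ k ∈ Finset.range r,
        (theta2l η τ tl (2*(((i'':ℂ)+(k:ℂ))-((j'':ℂ)-(k:ℂ)))*l*η
            + (u'-u)/2 + 2*l*η) /
         theta2l η τ tl (2*(((i'':ℂ)+(k:ℂ))-((j'':ℂ)-(k:ℂ)))*l*η
            + (u-u')/2 + 2*l*η)) = 1) := by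
  have htl0 : (tl:ℂ) ≠ 0 := Nat.cast_ne_zero.mpr htl.ne'
  have hr0 : (r:ℂ) ≠ 0 := Nat.cast_ne_zero.mpr hr.ne'
  have hl' : l = (tl:ℂ)/2 := by rw [hl]; ring
  have hη' : η = (r':ℂ)/((tl:ℂ)*(r:ℂ)) := by
    rw [hη, hl']; ring_nf
  have h2N : 2*(((r*tl : ℕ)):ℂ)*η = ((2*r':ℤ):ℂ) := by
    rw [hη']; push_cast; field_simp
  have hper : ∀ w : ℂ, ∀ A : ℤ, ∀ m : ℤ,
      Gaux η τ w A (m + (r*tl : ℕ)) = Gaux η τ w A m := by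
    intro w A m
    unfold Gaux
    rw [show w + ((A:ℂ) + 2*(((m + (r*tl:ℕ) : ℤ)):ℂ))*η
        = (w + ((A:ℂ) + 2*(m:ℂ))*η) + 2*(((r*tl : ℕ)):ℂ)*η by push_cast; ring,
      h2N, theta00_period']
  have key : ∀ i'' j'' : ℤ, ∀ w : ℂ,
      ∏ k ∈ Finset.range r,
          theta2l η τ tl (2*((i'':ℂ)-(j'':ℂ)+2*(k:ℂ)+1)*l*η + w)
        = ∏ k ∈ Finset.range r,
          theta2l η τ tl (2*((i'':ℂ)-(j'':ℂ)+2*(k:ℂ)+1)*l*η - w) := by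
    intro i'' j'' w
    have hL : ∏ k ∈ Finset.range r,
        theta2l η τ tl (2*((i'':ℂ)-(j'':ℂ)+2*(k:ℂ)+1)*l*η + w)
        = ∏ m ∈ Finset.range (r*tl), Gaux η τ w ((tl:ℤ)*(i''-j'')+1) m := by
      rw [← prod_nested' (fun m => Gaux η τ w ((tl:ℤ)*(i''-j'')+1) (m:ℤ)) r tl]
      unfold theta2l
      refine Finset.prod_congr rfl fun k _ => Finset.prod_congr rfl fun j _ => ?_
      show theta 0 0 _ τ = Gaux η τ w ((tl:ℤ)*(i''-j'')+1) ((tl*k+j : ℕ) : ℤ)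
      unfold Gaux
      congr 1
      rw [hl']; push_cast; ring
    have hR : ∏ k ∈ Finset.range r,
        theta2l η τ tl (2*((i'':ℂ)-(j'':ℂ)+2*(k:ℂ)+1)*l*η - w)
        = ∏ m ∈ Finset.range (r*tl),
            Gaux η τ w ((tl:ℤ)*(i''-j'')+1) (-((tl:ℤ)*(i''-j'')+1) - m) := by
      rw [← prod_nested'
        (fun m => Gaux η τ w ((tl:ℤ)*(i''-j'')+1) (-((tl:ℤ)*(i''-j'')+1) - (m:ℤ))) r tl]
      unfold theta2l
      refine Finset.prod_congr rfl fun k _ => Finset.prod_congr rfl fun j _ => ?_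
      show theta 0 0 _ τ
          = Gaux η τ w ((tl:ℤ)*(i''-j'')+1) (-((tl:ℤ)*(i''-j'')+1) - ((tl*k+j : ℕ) : ℤ))
      unfold Gaux
      rw [show 2*((i'':ℂ)-(j'':ℂ)+2*(k:ℂ)+1)*l*η - w + (2*(j:ℂ) - (tl:ℂ) + 1)*η
          = -(w + (((-((tl:ℤ)*(i''-j'')+1) - ((tl*k+j : ℕ) : ℤ) : ℤ)):ℂ)*2*η
              + (((((tl:ℤ)*(i''-j'')+1) : ℤ)):ℂ)*η) by rw [hl']; push_cast; ring]
      rw [theta00_even']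
      congr 1
      push_cast; ring
    rw [hL, hR]
    set A : ℤ := (tl:ℤ)*(i''-j'')+1 with hA
    -- reflect the product on the right, then use periodicity
    have hrefl : ∏ m ∈ Finset.range (r*tl), Gaux η τ w A (-A - m)
        = ∏ m ∈ Finset.range (r*tl), Gaux η τ w A ((-A - ((r*tl:ℕ):ℤ) + 1) + m) := by
      rw [← Finset.prod_range_reflect (fun m => Gaux η τ w A ((-A - ((r*tl:ℕ):ℤ) + 1) + m))]
      refine Finset.prod_congr rfl fun m hm => ?_
      have hm' : m < r*tl := Finset.mem_range.mp hm
      have hc : (((r*tl - 1 - m : ℕ)):ℤ) = ((r*tl:ℕ):ℤ) - 1 - (m:ℤ) := by omega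
      show Gaux η τ w A (-A - m) = Gaux η τ w A ((-A - ((r*tl:ℕ):ℤ) + 1) + ((r*tl - 1 - m : ℕ):ℤ))
      rw [hc]
      congr 1
      ring
    rw [hrefl, prod_shift' _ (r*tl) (hper w A) (-A - ((r*tl:ℕ):ℤ) + 1)]
  refine ⟨key, ?_⟩
  intro i'' j'' u u' hne
  rw [Finset.prod_div_distrib]
  have hnum : ∏ k ∈ Finset.range r,
      theta2l η τ tl (2*(((i'':ℂ)+(k:ℂ))-((j'':ℂ)-(k:ℂ)))*l*η + (u'-u)/2 + 2*l*η)
      = ∏ k ∈ Finset.range r,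
      theta2l η τ tl (2*((i'':ℂ)-(j'':ℂ)+2*(k:ℂ)+1)*l*η + (u'-u)/2) :=
    Finset.prod_congr rfl fun k _ => congrArg (theta2l η τ tl) (by ring)
  have hden : ∏ k ∈ Finset.range r,
      theta2l η τ tl (2*(((i'':ℂ)+(k:ℂ))-((j'':ℂ)-(k:ℂ)))*l*η + (u-u')/2 + 2*l*η)
      = ∏ k ∈ Finset.range r,
      theta2l η τ tl (2*((i'':ℂ)-(j'':ℂ)+2*(k:ℂ)+1)*l*η - (u'-u)/2) :=
    Finset.prod_congr rfl fun k _ => congrArg (theta2l η τ tl) (by ring)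
  rw [hnum, hden, key i'' j'' ((u'-u)/2)]
  apply div_self
  rw [← hden]
  exact Finset.prod_ne_zero_iff.mpr hne
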